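/- Let (ȳ, ū, λ̄) be a KKT triple. Let P be a symmetric positive definite solution of the ARE with ‖exp(t(A − BR⁻¹BᵀP))‖ ≤ M e^{−νt} for all t ≥ 0, and let N be a symmetric negative definite solution of the ARE with ‖exp(−t(A − BR⁻¹BᵀN))‖ ≤ M e^{−νt} for all t ≥ 0, for some M ≥ 1, ν > 0. Define V_f(y₀) as the infimum of ½∫₀^∞ (‖y(t) − y_d‖²_Q + ‖u(t) − u_d‖²_R − ‖ȳ − y_d‖²_Q − ‖ū − u_d‖²_R) dt over all pairs (y, u) with y differentiable, u continuous, ẏ = Ay + Bu, y(0) = y₀, y(t) → ȳ as t → ∞, and for which the functions t ↦ ‖y(t) − ȳ‖²_Q + ‖u(t) − ū‖²_R and t ↦ ⟨Q(ȳ − y_d), y(t) − ȳ⟩ + ⟨R(ū − u_d), u(t) − ū⟩ are integrable on [0, ∞); define V_b(y₁) analogously with the backward dynamics ẏ = −Ay − Bu, y(0) = y₁, y(t) → ȳ. Then V_f(y₀) = ½⟨P(y₀ − ȳ), y₀ − ȳ⟩ − ⟨λ̄, y₀ − ȳ⟩ and V_b(y₁) = −½⟨N(y₁ − ȳ), y₁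 − ȳ⟩ + ⟨λ̄, y₁ − ȳ⟩. -/

import Mathlib

open Matrix MeasureTheory

noncomputable section

namespace VfVb

open Set Filter




/-- Euclidean length of a plain vector. -/
def en {k : ℕ} (x : Fin k → ℝ) : ℝ := Real.sqrt (x ⬝ᵥ x)

lemma en_eq_norm {k : ℕ} (x : Fin k → ℝ) :
    en x = ‖(WithLp.equiv 2 (Fin k → ℝ)).symm x‖ := by
  rw [EuclideanSpace.norm_eq, en]
  congr 1
  simp [dotProduct, Real.norm_eq_abs, sq_abs, sq]

lemma en_nonneg {k : ℕ} (x : Fin k → ℝ) : 0 ≤ en x := Real.sqrt_nonneg _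

lemma abs_dot_le {k : ℕ} (v w : Fin k → ℝ) : |v ⬝ᵥ w| ≤ en v * en w := by
  have h := abs_real_inner_le_norm ((WithLp.equiv 2 (Fin k → ℝ)).symm v)
    ((WithLp.equiv 2 (Fin k → ℝ)).symm w)
  rw [← en_eq_norm, ← en_eq_norm] at h
  have h2 : (inner ℝ ((WithLp.equiv 2 (Fin k → ℝ)).symm v)
      ((WithLp.equiv 2 (Fin k → ℝ)).symm w) : ℝ) = v ⬝ᵥ w := by
    simp [PiLp.inner_apply, dotProduct, mul_comm]
  rwa [h2] at h

/-- every matrix acts boundedly w.r.t. the euclidean length -/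
lemma exists_mulVec_bound {p q : ℕ} (M : Matrix (Fin p) (Fin q) ℝ) :
    ∃ C : ℝ, 0 ≤ C ∧ ∀ v : Fin q → ℝ, en (M.mulVec v) ≤ C * en v := by
  refine ⟨‖(Matrix.toEuclideanLin M).toContinuousLinearMap‖, norm_nonneg _, fun v => ?_⟩
  have h := (Matrix.toEuclideanLin M).toContinuousLinearMap.le_opNorm
    ((WithLp.equiv 2 (Fin q → ℝ)).symm v)
  rw [← en_eq_norm] at h
  simpa [en_eq_norm, LinearMap.coe_toContinuousLinearMap'] using h

lemma sq_le_dot {k : ℕ} (x : Fin k → ℝ) (i : Fin k) : x i * x i ≤ x ⬝ᵥ x := by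
  have : x ⬝ᵥ x = ∑ j, x j * x j := rfl
  rw [this]
  exact Finset.single_le_sum (fun j _ => mul_self_nonneg (x j)) (Finset.mem_univ i)

lemma norm_le_en {k : ℕ} (x : Fin k → ℝ) : ‖x‖ ≤ en x := by
  rw [pi_norm_le_iff_of_nonneg (en_nonneg x)]
  intro i
  rw [Real.norm_eq_abs, ← Real.sqrt_mul_self_eq_abs]
  exact Real.sqrt_le_sqrt (sq_le_dot x i)




variable {k : ℕ}

/-- matrix as continuous linear map on the plain pi space -/
def matCLM (M : Matrix (Fin k) (Fin k) ℝ) : (Fin k → ℝ) →L[ℝ] (Fin k → ℝ) :=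
  LinearMap.toContinuousLinearMap (Matrix.mulVecLin M)

@[simp] lemma matCLM_apply (M : Matrix (Fin k) (Fin k) ℝ) (x : Fin k → ℝ) :
    matCLM M x = M.mulVec x := rfl

/-- as a ring hom -/
def matRH : Matrix (Fin k) (Fin k) ℝ →+* ((Fin k → ℝ) →L[ℝ] (Fin k → ℝ)) where
  toFun := matCLM
  map_one' := by ext x i; simp [matCLM]
  map_mul' M N := by ext x i; simp [matCLM, Matrix.mulVec_mulVec]
  map_zero' := by ext x i; simp [matCLM]
  map_add' M N := by ext x i; simp [matCLM, Matrix.add_mulVec]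

lemma matRH_linear : IsLinearMap ℝ (matRH (k := k)) := by
  constructor
  · exact matRH.map_add
  · intro c M; ext x i
    simp [matRH, matCLM, Matrix.smul_mulVec]

lemma matRH_continuous : Continuous (matRH (k := k)) :=
  LinearMap.continuous_of_finiteDimensional (matRH_linear.mk' _)

lemma matCLM_exp (M : Matrix (Fin k) (Fin k) ℝ) :
    matCLM (NormedSpace.exp M) = NormedSpace.exp (matCLM M) := by
  letI : SeminormedRing (Matrix (Fin k) (Fin k) ℝ) := Matrix.linftyOpSemiNormedRing
  letI : NormedRing (Matrix (Fin k) (Fin k) ℝ) := Matrix.linftyOpNormedRing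
  letI : NormedAlgebra ℝ (Matrix (Fin k) (Fin k) ℝ) := Matrix.linftyOpNormedAlgebra
  exact NormedSpace.map_exp_of_mem_ball (𝕂 := ℝ) (matRH (k := k)) matRH_continuous M
    ((NormedSpace.expSeries_radius_eq_top ℝ (Matrix (Fin k) (Fin k) ℝ)).symm ▸ edist_lt_top _ _)

lemma exp_mulVec (M : Matrix (Fin k) (Fin k) ℝ) (x : Fin k → ℝ) :
    (NormedSpace.exp M).mulVec x = NormedSpace.exp (matCLM M) x := by
  rw [← matCLM_exp]; rfl

lemma matCLM_smul (c : ℝ) (M : Matrix (Fin k) (Fin k) ℝ) :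
    matCLM (c • M) = c • matCLM M := matRH_linear.map_smul c M

/-- derivative of `t ↦ exp(t • M) x` -/
lemma hasDerivAt_exp_mulVec (M : Matrix (Fin k) (Fin k) ℝ) (x : Fin k → ℝ) (t : ℝ) :
    HasDerivAt (fun s : ℝ => (NormedSpace.exp (s • M)).mulVec x)
      (M.mulVec ((NormedSpace.exp (t • M)).mulVec x)) t := by
  have h1 : ∀ s : ℝ, (NormedSpace.exp (s • M)).mulVec x
      = (NormedSpace.exp (s • matCLM M)) x := by
    intro s; rw [exp_mulVec, matCLM_smul]
  simp_rw [h1]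
  have h2 := hasDerivAt_exp_smul_const' (𝕂 := ℝ) (matCLM M) t
  have h3 := ((ContinuousLinearMap.apply ℝ (Fin k → ℝ) x).hasFDerivAt.comp_hasDerivAt t h2)
  have h4 : (ContinuousLinearMap.apply ℝ (Fin k → ℝ) x) ∘
      (fun s : ℝ => NormedSpace.exp (s • matCLM M))
      = fun s : ℝ => (NormedSpace.exp (s • matCLM M)) x := rfl
  rw [h4] at h3
  have h5 : (ContinuousLinearMap.apply ℝ (Fin k → ℝ) x) (matCLM M * NormedSpace.exp (t • matCLM M))
      = M.mulVec ((NormedSpace.exp (t • matCLM M)) x) := rfl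
  rwa [h5] at h3



variable {k l : ℕ}

lemma hasDerivWithinAt_coord {y : ℝ → Fin k → ℝ} {v : Fin k → ℝ} {s : Set ℝ} {t : ℝ}
    (hy : HasDerivWithinAt y v s t) (i : Fin k) :
    HasDerivWithinAt (fun τ => y τ i) (v i) s t := by
  have := (ContinuousLinearMap.proj (R := ℝ) (φ := fun _ : Fin k => ℝ) i).hasFDerivAt.comp_hasDerivWithinAt t hy
  exact this

lemma hasDerivWithinAt_dot_const (c : Fin k → ℝ) {y : ℝ → Fin k → ℝ} {v : Fin k → ℝ}
    {s : Set ℝ} {t : ℝ} (hy : HasDerivWithinAt y v s t) :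
    HasDerivWithinAt (fun τ => c ⬝ᵥ y τ) (c ⬝ᵥ v) s t := by
  have : ∀ τ, c ⬝ᵥ y τ = ∑ i, c i * y τ i := fun τ => rfl
  simp_rw [this]
  have hv : c ⬝ᵥ v = ∑ i, c i * v i := rfl
  rw [hv]
  exact HasDerivWithinAt.fun_sum (fun i _ => (hasDerivWithinAt_coord hy i).const_mul (c i))

lemma hasDerivWithinAt_quad (S : Matrix (Fin k) (Fin k) ℝ) (hS : Sᵀ = S)
    {y : ℝ → Fin k → ℝ} {v : Fin k → ℝ} {s : Set ℝ} {t : ℝ}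
    (hy : HasDerivWithinAt y v s t) :
    HasDerivWithinAt (fun τ => S.mulVec (y τ) ⬝ᵥ y τ) (2 * (S.mulVec (y t) ⬝ᵥ v)) s t := by
  have hexp : ∀ τ, S.mulVec (y τ) ⬝ᵥ y τ = ∑ i, ∑ j, S i j * (y τ j * y τ i) := by
    intro τ
    simp only [dotProduct, Matrix.mulVec, Finset.sum_mul]
    exact Finset.sum_congr rfl fun i _ => Finset.sum_congr rfl fun j _ => by ring
  simp_rw [hexp]
  have key : HasDerivWithinAt (fun τ => ∑ i, ∑ j, S i j * (y τ j * y τ i))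
      (∑ i, ∑ j, S i j * (v j * y t i + y t j * v i)) s t := by
    refine HasDerivWithinAt.fun_sum (fun i _ => HasDerivWithinAt.fun_sum (fun j _ => ?_))
    exact ((hasDerivWithinAt_coord hy j).mul (hasDerivWithinAt_coord hy i)).const_mul (S i j)
  convert key using 1
  have hsym : ∀ i j, S j i = S i j := fun i j => (congrFun (congrFun hS.symm i) j).symm
  have swap : ∑ i, ∑ j, S i j * (v j * y t i) = ∑ i, ∑ j, S i j * (y t j * v i) := by
    rw [Finset.sum_comm]
    exact Finset.sum_congr rfl fun i _ => Finset.sum_congr rfl fun j _ => by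
      rw [hsym i j]; ring
  have hX : S.mulVec (y t) ⬝ᵥ v = ∑ i, ∑ j, S i j * (y t j * v i) := by
    simp only [dotProduct, Matrix.mulVec, Finset.sum_mul]
    exact Finset.sum_congr rfl fun i _ => Finset.sum_congr rfl fun j _ => by ring
  simp only [mul_add, Finset.sum_add_distrib, swap, hX]
  ring

/-- continuity of pointwise dot products -/
lemma continuousOn_dot {X : Type*} [TopologicalSpace X] {s : Set X} {v w : X → Fin k → ℝ}
    (hv : ContinuousOn v s) (hw : ContinuousOn w s) :
    ContinuousOn (fun t => v t ⬝ᵥ w t) s := by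
  have : ∀ t, v t ⬝ᵥ w t = ∑ i, v t i * w t i := fun _ => rfl
  simp_rw [this]
  refine continuousOn_finset_sum _ fun i _ => ContinuousOn.mul ?_ ?_
  · exact (continuous_apply i).comp_continuousOn hv
  · exact (continuous_apply i).comp_continuousOn hw

lemma continuousOn_mulVec {X : Type*} [TopologicalSpace X] {s : Set X} (M : Matrix (Fin l) (Fin k) ℝ) {v : X → Fin k → ℝ}
    (hv : ContinuousOn v s) : ContinuousOn (fun t => M.mulVec (v t)) s := by
  have hM : Continuous fun x : Fin k → ℝ => M.mulVec x :=
    (LinearMap.toContinuousLinearMap (Matrix.mulVecLin M)).continuous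
  exact hM.comp_continuousOn hv

/-- integrability of exponential envelopes on `Ici 0` -/
lemma integrableOn_exp_decay (C a : ℝ) (ha : 0 < a) :
    IntegrableOn (fun t => C * Real.exp (-a * t)) (Set.Ici (0:ℝ)) := by
  have h := exp_neg_integrableOn_Ioi 0 ha
  have h2 : IntegrableOn (fun t => Real.exp (-a * t)) (Set.Ici (0:ℝ)) := by
    rwa [integrableOn_Ici_iff_integrableOn_Ioi]
  exact h2.const_mul C



variable {p q : ℕ}

lemma mulVec_dot (M : Matrix (Fin p) (Fin q) ℝ) (a : Fin q → ℝ) (b : Fin p → ℝ) :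
    M.mulVec a ⬝ᵥ b = a ⬝ᵥ Mᵀ.mulVec b := by
  rw [dotProduct_comm, Matrix.dotProduct_mulVec, Matrix.mulVec_transpose]
  exact dotProduct_comm _ _

lemma dot_symm (S : Matrix (Fin p) (Fin p) ℝ) (hS : Sᵀ = S) (a b : Fin p → ℝ) :
    S.mulVec a ⬝ᵥ b = S.mulVec b ⬝ᵥ a := by
  rw [mulVec_dot, hS, dotProduct_comm]

lemma posdef_symm {S : Matrix (Fin p) (Fin p) ℝ} (hS : S.PosDef) : Sᵀ = S := by
  have h := hS.1
  ext i j
  have := congrFun (congrFun h i) j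
  simpa [Matrix.conjTranspose_apply] using this

lemma posdef_dot_nonneg {S : Matrix (Fin p) (Fin p) ℝ} (hS : S.PosDef) (x : Fin p → ℝ) :
    0 ≤ S.mulVec x ⬝ᵥ x := by
  have h := hS.posSemidef.dotProduct_mulVec_nonneg x
  simpa [dotProduct_comm] using h

lemma quad_shift (S : Matrix (Fin p) (Fin p) ℝ) (hS : Sᵀ = S) (a b : Fin p → ℝ) :
    S.mulVec (a + b) ⬝ᵥ (a + b)
      = S.mulVec a ⬝ᵥ a + 2 * (S.mulVec b ⬝ᵥ a) + S.mulVec b ⬝ᵥ b := by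
  rw [Matrix.mulVec_add, add_dotProduct, dotProduct_add, dotProduct_add,
    dot_symm S hS a b]
  ring

/-- the completing-the-square core identity -/
lemma core_identity {n m : ℕ}
    (A : Matrix (Fin n) (Fin n) ℝ) (B : Matrix (Fin n) (Fin m) ℝ)
    (Q : Matrix (Fin n) (Fin n) ℝ)
    (R : Matrix (Fin m) (Fin m) ℝ) (hRsymm : Rᵀ = R) (hRunit : R * R⁻¹ = 1)
    (S : Matrix (Fin n) (Fin n) ℝ) (hSsymm : Sᵀ = S)
    (hARE : Aᵀ * S + S * A - S * B * R⁻¹ * Bᵀ * S = -Q)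
    (e : Fin n → ℝ) (w : Fin m → ℝ) :
    Q.mulVec e ⬝ᵥ e + R.mulVec w ⬝ᵥ w + 2 * (S.mulVec e ⬝ᵥ (A.mulVec e + B.mulVec w))
      = R.mulVec (w + (R⁻¹ * Bᵀ * S).mulVec e) ⬝ᵥ (w + (R⁻¹ * Bᵀ * S).mulVec e) := by
  have hARE' : S * B * R⁻¹ * Bᵀ * S = Aᵀ * S + S * A + Q := by
    calc S * B * R⁻¹ * Bᵀ * S
        = Aᵀ * S + S * A - (Aᵀ * S + S * A - S * B * R⁻¹ * Bᵀ * S) := by abel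
      _ = Aᵀ * S + S * A - (-Q) := by rw [hARE]
      _ = Aᵀ * S + S * A + Q := by abel
  set p : Fin m → ℝ := (R⁻¹ * Bᵀ * S).mulVec e with hp
  -- R p = Bᵀ S e
  have hRp : R.mulVec p = (Bᵀ * S).mulVec e := by
    rw [hp, Matrix.mulVec_mulVec, ← Matrix.mul_assoc, ← Matrix.mul_assoc, hRunit, Matrix.one_mul]
  -- cross term
  have hcross : R.mulVec p ⬝ᵥ w = S.mulVec e ⬝ᵥ B.mulVec w := by
    rw [hRp, ← Matrix.mulVec_mulVec, mulVec_dot Bᵀ, Matrix.transpose_transpose,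
      dotProduct_comm]
  -- quadratic term
  have hquad : R.mulVec p ⬝ᵥ p = (S * B * R⁻¹ * Bᵀ * S).mulVec e ⬝ᵥ e := by
    rw [hRp, hp, mulVec_dot (Bᵀ * S), Matrix.transpose_mul, Matrix.transpose_transpose, hSsymm,
      Matrix.mulVec_mulVec, dotProduct_comm]
    congr 2
    simp only [Matrix.mul_assoc]
  -- the A-term via ARE
  have hAterm : 2 * (S.mulVec e ⬝ᵥ A.mulVec e)
      = (S * B * R⁻¹ * Bᵀ * S).mulVec e ⬝ᵥ e - Q.mulVec e ⬝ᵥ e := by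
    have h1 : (Aᵀ * S + S * A).mulVec e ⬝ᵥ e = 2 * (S.mulVec e ⬝ᵥ A.mulVec e) := by
      rw [Matrix.add_mulVec, add_dotProduct]
      have h2 : (Aᵀ * S).mulVec e ⬝ᵥ e = S.mulVec e ⬝ᵥ A.mulVec e := by
        rw [← Matrix.mulVec_mulVec, mulVec_dot Aᵀ, Matrix.transpose_transpose]
      have h3 : (S * A).mulVec e ⬝ᵥ e = S.mulVec e ⬝ᵥ A.mulVec e := by
        rw [← Matrix.mulVec_mulVec, dot_symm S hSsymm, dotProduct_comm]
      rw [h2, h3]; ring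
    have h4 : (S * B * R⁻¹ * Bᵀ * S).mulVec e ⬝ᵥ e
        = (Aᵀ * S + S * A).mulVec e ⬝ᵥ e + Q.mulVec e ⬝ᵥ e := by
      rw [hARE', Matrix.add_mulVec, add_dotProduct]
    rw [h4, h1]; ring
  have hq : R.mulVec (w + p) ⬝ᵥ (w + p)
      = R.mulVec w ⬝ᵥ w + 2 * (R.mulVec p ⬝ᵥ w) + R.mulVec p ⬝ᵥ p :=
    quad_shift R hRsymm w p
  rw [hq, hcross, hquad, dotProduct_add, mul_add]
  rw [← sub_eq_zero] at hAterm ⊢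
  linarith [hAterm]




lemma master (n m : ℕ)
    (A : Matrix (Fin n) (Fin n) ℝ) (B : Matrix (Fin n) (Fin m) ℝ)
    (Q : Matrix (Fin n) (Fin n) ℝ) (hQ : Q.PosDef)
    (R : Matrix (Fin m) (Fin m) ℝ) (hR : R.PosDef)
    (yd : Fin n → ℝ) (ud : Fin m → ℝ)
    (ybar : Fin n → ℝ) (ubar : Fin m → ℝ) (lambdabar : Fin n → ℝ)
    (hfeas : A.mulVec ybar + B.mulVec ubar = 0)
    (hKKT1 : Q.mulVec (ybar - yd) = Aᵀ.mulVec lambdabar)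
    (hKKT2 : R.mulVec (ubar - ud) = Bᵀ.mulVec lambdabar)
    (ε : ℝ) (hε : ε = 1 ∨ ε = -1)
    (S : Matrix (Fin n) (Fin n) ℝ) (hSsymm : Sᵀ = S)
    (hARE : Aᵀ * S + S * A - S * B * R⁻¹ * Bᵀ * S = -Q)
    (M ν : ℝ) (hν : 0 < ν)
    (hstab : ∀ t : ℝ, 0 ≤ t → ∀ x : Fin n → ℝ,
      en ((NormedSpace.exp ((ε * t) • (A - B * R⁻¹ * Bᵀ * S))).mulVec x)
        ≤ M * Real.exp (-ν * t) * en x)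
    (d : (Fin n → ℝ) → (Fin m → ℝ) → (Fin n → ℝ))
    (hd : ∀ v w, d v w = ε • (A.mulVec v + B.mulVec w))
    (y₀ : Fin n → ℝ) :
    sInf {c : ℝ | ∃ y : ℝ → Fin n → ℝ, ∃ u : ℝ → Fin m → ℝ,
        (∀ t ∈ Set.Ici (0 : ℝ),
          HasDerivWithinAt y (d (y t) (u t)) (Set.Ici 0) t) ∧
        ContinuousOn u (Set.Ici 0) ∧
        y 0 = y₀ ∧
        Filter.Tendsto y Filter.atTop (nhds ybar) ∧
        IntegrableOn (fun t => Q.mulVec (y t - ybar) ⬝ᵥ (y t - ybar)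
          + R.mulVec (u t - ubar) ⬝ᵥ (u t - ubar)) (Set.Ici 0) ∧
        IntegrableOn (fun t => Q.mulVec (ybar - yd) ⬝ᵥ (y t - ybar)
          + R.mulVec (ubar - ud) ⬝ᵥ (u t - ubar)) (Set.Ici 0) ∧
        c = (1 / 2) * ∫ t in Set.Ioi (0 : ℝ),
          (Q.mulVec (y t - yd) ⬝ᵥ (y t - yd) + R.mulVec (u t - ud) ⬝ᵥ (u t - ud)
            - Q.mulVec (ybar - yd) ⬝ᵥ (ybar - yd) - R.mulVec (ubar - ud) ⬝ᵥ (ubar - ud))}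
      = ε * ((1 / 2) * (S.mulVec (y₀ - ybar) ⬝ᵥ (y₀ - ybar)) - lambdabar ⬝ᵥ (y₀ - ybar)) := by
  have hεsq : ε * ε = 1 := by rcases hε with h | h <;> rw [h] <;> norm_num
  have hQsymm : Qᵀ = Q := posdef_symm hQ
  have hRsymm : Rᵀ = R := posdef_symm hR
  have hRunit : R * R⁻¹ = 1 := Matrix.mul_nonsing_inv R hR.det_pos.ne'.isUnit
  set G : Matrix (Fin m) (Fin n) ℝ := R⁻¹ * Bᵀ * S with hG
  set Kmat : Matrix (Fin n) (Fin n) ℝ := A - B * R⁻¹ * Bᵀ * S with hK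
  set W : (Fin n → ℝ) → ℝ :=
    fun x => ε * ((1 / 2) * (S.mulVec x ⬝ᵥ x) - lambdabar ⬝ᵥ x) with hWdef
  -- continuity of W
  have hWcont : Continuous W := by
    rw [← continuousOn_univ]
    have h1 : ContinuousOn (fun x : Fin n → ℝ => S.mulVec x ⬝ᵥ x) univ :=
      continuousOn_dot (continuousOn_mulVec S (continuous_id.continuousOn))
        (continuous_id.continuousOn)
    have h2 : ContinuousOn (fun x : Fin n → ℝ => lambdabar ⬝ᵥ x) univ :=
      continuousOn_dot continuousOn_const (continuous_id.continuousOn)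
    exact continuousOn_const.mul ((continuousOn_const.mul h1).sub h2)
  have hW0 : W 0 = 0 := by simp [hWdef]
  -- the central inequality / equality for admissible pairs
  have main : ∀ (y : ℝ → Fin n → ℝ) (u : ℝ → Fin m → ℝ),
      (∀ t ∈ Set.Ici (0 : ℝ),
        HasDerivWithinAt y (ε • (A.mulVec (y t) + B.mulVec (u t))) (Set.Ici 0) t) →
      ContinuousOn u (Set.Ici 0) →
      Filter.Tendsto y Filter.atTop (nhds ybar) →
      IntegrableOn (fun t => Q.mulVec (y t - ybar) ⬝ᵥ (y t - ybar)
          + R.mulVec (u t - ubar) ⬝ᵥ (u t - ubar)) (Set.Ici 0) →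
      IntegrableOn (fun t => Q.mulVec (ybar - yd) ⬝ᵥ (y t - ybar)
          + R.mulVec (ubar - ud) ⬝ᵥ (u t - ubar)) (Set.Ici 0) →
      (2 * W (y 0 - ybar) ≤ ∫ t in Set.Ioi (0 : ℝ),
          (Q.mulVec (y t - yd) ⬝ᵥ (y t - yd) + R.mulVec (u t - ud) ⬝ᵥ (u t - ud)
            - Q.mulVec (ybar - yd) ⬝ᵥ (ybar - yd) - R.mulVec (ubar - ud) ⬝ᵥ (ubar - ud)))
      ∧ ((∀ t, u t = ubar - G.mulVec (y t - ybar)) →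
        (∫ t in Set.Ioi (0 : ℝ),
          (Q.mulVec (y t - yd) ⬝ᵥ (y t - yd) + R.mulVec (u t - ud) ⬝ᵥ (u t - ud)
            - Q.mulVec (ybar - yd) ⬝ᵥ (ybar - yd) - R.mulVec (ubar - ud) ⬝ᵥ (ubar - ud)))
          = 2 * W (y 0 - ybar)) := by
    intro y u hy hu hlim hI1 hI2
    set e : ℝ → Fin n → ℝ := fun t => y t - ybar with he
    set w : ℝ → Fin m → ℝ := fun t => u t - ubar with hw
    set qv : ℝ → Fin n → ℝ := fun t => A.mulVec (e t) + B.mulVec (w t) with hqv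
    set z : ℝ → Fin m → ℝ := fun t => w t + G.mulVec (e t) with hz
    set g : ℝ → ℝ := fun t => Q.mulVec (y t - yd) ⬝ᵥ (y t - yd) + R.mulVec (u t - ud) ⬝ᵥ (u t - ud)
            - Q.mulVec (ybar - yd) ⬝ᵥ (ybar - yd) - R.mulVec (ubar - ud) ⬝ᵥ (ubar - ud) with hgdef
    set r : ℝ → ℝ := fun t => R.mulVec (z t) ⬝ᵥ z t with hrdef
    set F : ℝ → ℝ := fun t => W (e t) with hFdef
    set D : ℝ → ℝ := fun t => S.mulVec (e t) ⬝ᵥ qv t - lambdabar ⬝ᵥ qv t with hDdef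
    -- continuity facts
    have hcy : ContinuousOn y (Ici 0) := fun t ht => (hy t ht).continuousWithinAt
    have hce : ContinuousOn e (Ici 0) := hcy.sub continuousOn_const
    have hcw : ContinuousOn w (Ici 0) := hu.sub continuousOn_const
    have hcz : ContinuousOn z (Ici 0) := hcw.add (continuousOn_mulVec G hce)
    have hcr : ContinuousOn r (Ici 0) := continuousOn_dot (continuousOn_mulVec R hcz) hcz
    -- decomposition of the cost integrand
    have decomp : ∀ t, g t = (Q.mulVec (e t) ⬝ᵥ e t + R.mulVec (w t) ⬝ᵥ w t)
        + 2 * (Q.mulVec (ybar - yd) ⬝ᵥ e t + R.mulVec (ubar - ud) ⬝ᵥ w t) := by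
      intro t
      have hy' : y t - yd = e t + (ybar - yd) := by rw [he]; exact (sub_add_sub_cancel _ _ _).symm
      have hu' : u t - ud = w t + (ubar - ud) := by rw [hw]; exact (sub_add_sub_cancel _ _ _).symm
      rw [hgdef]
      simp only [hy', hu', quad_shift Q hQsymm, quad_shift R hRsymm]
      ring
    -- integrability of g on [0,∞)
    have hIg : IntegrableOn g (Ici 0) := by
      have h0 : IntegrableOn (fun t => (Q.mulVec (y t - ybar) ⬝ᵥ (y t - ybar)
          + R.mulVec (u t - ubar) ⬝ᵥ (u t - ubar))
          + 2 * (Q.mulVec (ybar - yd) ⬝ᵥ (y t - ybar)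
          + R.mulVec (ubar - ud) ⬝ᵥ (u t - ubar))) (Ici 0) := by
        have h2 := (hI2.const_mul 2)
        exact hI1.add h2
      refine h0.congr_fun (fun t _ => ?_) measurableSet_Ici
      exact (decomp t).symm
    -- derivative of F
    have hDF : ∀ t ∈ Ici (0:ℝ), HasDerivWithinAt F (D t) (Ici 0) t := by
      intro t ht
      have hyd := hy t ht
      have hqe : A.mulVec (y t) + B.mulVec (u t) = qv t := by
        rw [hqv, he, hw]
        simp only [Matrix.mulVec_sub]
        rw [show A.mulVec (y t) - A.mulVec ybar + (B.mulVec (u t) - B.mulVec ubar)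
          = A.mulVec (y t) + B.mulVec (u t) - (A.mulVec ybar + B.mulVec ubar) from by abel,
          hfeas, sub_zero]
      have he' : HasDerivWithinAt e (ε • qv t) (Ici 0) t := by
        rw [he]
        have h1 := hyd.sub_const ybar
        rwa [hqe] at h1
      have hquadd := hasDerivWithinAt_quad S hSsymm he'
      have hlin := hasDerivWithinAt_dot_const lambdabar he'
      have comb := ((hquadd.const_mul ((1:ℝ)/2)).sub hlin).const_mul ε
      have hfun : (fun τ => ε * ((1/2) * (S.mulVec (e τ) ⬝ᵥ e τ) - lambdabar ⬝ᵥ e τ)) = F := by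
        rw [hFdef, hWdef]
      rw [← hfun]
      have hval : ε * ((1/2) * (2 * (S.mulVec (e t) ⬝ᵥ (ε • qv t))) - lambdabar ⬝ᵥ (ε • qv t))
          = D t := by
        simp only [dotProduct_smul, smul_eq_mul, hDdef]
        linear_combination (S.mulVec (e t) ⬝ᵥ qv t - lambdabar ⬝ᵥ qv t) * hεsq
      rwa [hval] at comb
    -- the pointwise key identity
    have keyid : ∀ t, g t = r t - 2 * D t := by
      intro t
      have hf2 : Q.mulVec (ybar - yd) ⬝ᵥ e t + R.mulVec (ubar - ud) ⬝ᵥ w t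
          = lambdabar ⬝ᵥ qv t := by
        rw [hKKT1, hKKT2, mulVec_dot Aᵀ, Matrix.transpose_transpose,
          mulVec_dot Bᵀ, Matrix.transpose_transpose, hqv, dotProduct_add]
      have hcore := core_identity A B Q R hRsymm hRunit S hSsymm hARE (e t) (w t)
      have hd1 := decomp t
      rw [hf2] at hd1
      rw [← hG] at hcore
      rw [hd1]
      simp only [hrdef, hDdef, hz, hqv]
      linarith [hcore]
    have hr0 : ∀ t, 0 ≤ r t := fun t => posdef_dot_nonneg hR (z t)
    -- fundamental theorem of calculus on [0, T]
    have hFTC : ∀ T, 0 ≤ T →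
        ∫ t in (0:ℝ)..T, g t = (∫ t in (0:ℝ)..T, r t) - 2 * (F T - F 0) := by
      intro T hT
      have hIccIci : Icc (0:ℝ) T ⊆ Ici 0 := fun x hx => hx.1
      have hrcc : ContinuousOn r (Icc 0 T) := hcr.mono hIccIci
      have hrint : IntervalIntegrable r volume 0 T := by
        rw [intervalIntegrable_iff_integrableOn_Icc_of_le hT]
        exact hrcc.integrableOn_compact isCompact_Icc
      have hgicc : IntegrableOn g (Icc 0 T) := hIg.mono_set hIccIci
      have hgint : IntervalIntegrable g volume 0 T :=
        (intervalIntegrable_iff_integrableOn_Icc_of_le hT).mpr hgicc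
      have hDint : IntervalIntegrable D volume 0 T := by
        rw [intervalIntegrable_iff_integrableOn_Icc_of_le hT]
        have hsub : IntegrableOn (fun t => (r t - g t) / 2) (Icc 0 T) :=
          (((hrcc.integrableOn_compact isCompact_Icc).sub hgicc).div_const 2)
        refine hsub.congr_fun (fun t _ => ?_) measurableSet_Icc
        have hk := keyid t
        simp only [hk]
        ring
      have hFcont : ContinuousOn F (Icc 0 T) := by
        rw [hFdef]
        exact hWcont.comp_continuousOn (hce.mono hIccIci)
      have hFderiv : ∀ x ∈ Ioo 0 T, HasDerivWithinAt F (D x) (Ioi x) x := by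
        intro x hx
        exact (hDF x (le_of_lt hx.1)).mono (fun s hs => le_of_lt (lt_trans hx.1 hs))
      have hftc := intervalIntegral.integral_eq_sub_of_hasDeriv_right_of_le hT hFcont hFderiv hDint
      have hgeq : ∫ t in (0:ℝ)..T, g t = ∫ t in (0:ℝ)..T, (r t - 2 * D t) :=
        intervalIntegral.integral_congr (fun t _ => keyid t)
      rw [hgeq, intervalIntegral.integral_sub hrint (hDint.const_mul 2),
        intervalIntegral.integral_const_mul, hftc]
    -- limits
    have hgInt' : IntegrableOn g (Ioi 0) := hIg.mono_set Set.Ioi_subset_Ici_self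
    have hglim : Tendsto (fun T => ∫ t in (0:ℝ)..T, g t) atTop (nhds (∫ t in Set.Ioi (0:ℝ), g t)) :=
      intervalIntegral_tendsto_integral_Ioi 0 hgInt' tendsto_id
    have helim : Tendsto e atTop (nhds 0) := by
      have h1 := hlim.sub (tendsto_const_nhds (x := ybar))
      rwa [sub_self] at h1
    have hFlim : Tendsto F atTop (nhds 0) := by
      have h1 := (hWcont.tendsto 0).comp helim
      rwa [hW0] at h1
    have hint_eq : (∫ t in Set.Ioi (0 : ℝ),
          (Q.mulVec (y t - yd) ⬝ᵥ (y t - yd) + R.mulVec (u t - ud) ⬝ᵥ (u t - ud)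
            - Q.mulVec (ybar - yd) ⬝ᵥ (ybar - yd) - R.mulVec (ubar - ud) ⬝ᵥ (ubar - ud)))
        = ∫ t in Set.Ioi (0:ℝ), g t := rfl
    constructor
    · -- inequality
      rw [hint_eq]
      have hineq : ∀ᶠ T in atTop, 2 * F 0 - 2 * F T ≤ ∫ t in (0:ℝ)..T, g t := by
        filter_upwards [eventually_ge_atTop (0:ℝ)] with T hT
        have h1 := hFTC T hT
        have h2 : 0 ≤ ∫ t in (0:ℝ)..T, r t :=
          intervalIntegral.integral_nonneg hT (fun x _ => hr0 x)
        linarith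
      have hrhs : Tendsto (fun T => 2 * F 0 - 2 * F T) atTop (nhds (2 * F 0)) := by
        have h1 := (tendsto_const_nhds (x := 2 * F 0)).sub ((hFlim.const_mul 2))
        simpa using h1
      have hfin := le_of_tendsto_of_tendsto hrhs hglim hineq
      have hF0 : F 0 = W (y 0 - ybar) := by rw [hFdef, he]
      rw [hF0] at hfin
      exact hfin
    · -- equality for the optimal feedback
      intro hfb
      rw [hint_eq]
      have hz0 : ∀ t, z t = 0 := by
        intro t
        simp only [hz, hw, he]
        rw [hfb t]
        abel
      have hr0' : ∀ t, r t = 0 := by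
        intro t
        simp only [hrdef]
        rw [hz0 t]
        simp
      have heq2 : ∀ᶠ T in atTop, (∫ t in (0:ℝ)..T, g t) = 2 * F 0 - 2 * F T := by
        filter_upwards [eventually_ge_atTop (0:ℝ)] with T hT
        have h1 := hFTC T hT
        have h2 : (∫ t in (0:ℝ)..T, r t) = 0 := by
          have : ∀ t, r t = 0 := hr0'
          simp only [this, intervalIntegral.integral_zero]
        rw [h2] at h1
        linarith
      have hrhs : Tendsto (fun T => 2 * F 0 - 2 * F T) atTop (nhds (2 * F 0)) := by
        have h1 := (tendsto_const_nhds (x := 2 * F 0)).sub ((hFlim.const_mul 2))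
        simpa using h1
      have h3 : Tendsto (fun T => 2 * F 0 - 2 * F T) atTop (nhds (∫ t in Set.Ioi (0:ℝ), g t)) :=
        hglim.congr' heq2
      have h4 := tendsto_nhds_unique h3 hrhs
      rw [h4]

  -- the optimal feedback trajectory
  set e0 : Fin n → ℝ := y₀ - ybar with he0
  set eop : ℝ → Fin n → ℝ := fun t => (NormedSpace.exp (t • (ε • Kmat))).mulVec e0 with heop
  have hstab' : ∀ t, 0 ≤ t → en (eop t) ≤ M * Real.exp (-ν * t) * en e0 := by
    intro t ht
    have h1 := hstab t ht e0
    simp only [heop]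
    rw [smul_smul, mul_comm t ε]
    exact h1
  have hde : ∀ t, HasDerivAt eop ((ε • Kmat).mulVec (eop t)) t := by
    intro t
    have h1 := hasDerivAt_exp_mulVec (ε • Kmat) e0 t
    simp only [heop]
    exact h1
  have hceop : Continuous eop := by
    rw [continuous_iff_continuousAt]
    exact fun t => (hde t).continuousAt
  have hBG : B * G = B * R⁻¹ * Bᵀ * S := by rw [hG]; simp only [Matrix.mul_assoc]
  have hyuB : ∀ t : ℝ, A.mulVec (ybar + eop t) + B.mulVec (ubar - G.mulVec (eop t))
      = Kmat.mulVec (eop t) := by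
    intro t
    have hBGv : B.mulVec (G.mulVec (eop t)) = (B * R⁻¹ * Bᵀ * S).mulVec (eop t) := by
      rw [Matrix.mulVec_mulVec, hBG]
    rw [Matrix.mulVec_add, Matrix.mulVec_sub, hBGv, hK, Matrix.sub_mulVec]
    rw [show A.mulVec ybar + A.mulVec (eop t)
        + (B.mulVec ubar - (B * R⁻¹ * Bᵀ * S).mulVec (eop t))
      = (A.mulVec ybar + B.mulVec ubar)
        + (A.mulVec (eop t) - (B * R⁻¹ * Bᵀ * S).mulVec (eop t))
      from by abel, hfeas, zero_add]
  have hyder : ∀ t ∈ Ici (0:ℝ), HasDerivWithinAt (fun t => ybar + eop t)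
      (ε • (A.mulVec ((fun t => ybar + eop t) t)
        + B.mulVec ((fun t => ubar - G.mulVec (eop t)) t))) (Ici 0) t := by
    intro t ht
    have h1 := ((hde t).const_add ybar).hasDerivWithinAt (s := Ici 0)
    have hval : (ε • Kmat).mulVec (eop t)
        = ε • (A.mulVec (ybar + eop t) + B.mulVec (ubar - G.mulVec (eop t))) := by
      rw [hyuB t, Matrix.smul_mulVec]
    rwa [hval] at h1
  have hucont : ContinuousOn (fun t => ubar - G.mulVec (eop t)) (Ici (0:ℝ)) :=
    (continuousOn_const.sub (continuousOn_mulVec G hceop.continuousOn))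
  have heop0 : eop 0 = e0 := by
    simp [heop, NormedSpace.exp_zero, Matrix.one_mulVec]
  have hy0' : (fun t => ybar + eop t) 0 = y₀ := by
    simp only [heop0]
    rw [he0]
    abel
  -- tendsto
  have hexp0 : Tendsto (fun t : ℝ => Real.exp (-ν * t)) atTop (nhds 0) := by
    have h2 : Tendsto (fun t : ℝ => ν * t) atTop atTop := tendsto_id.const_mul_atTop hν
    have h3 := Real.tendsto_exp_neg_atTop_nhds_zero.comp h2
    refine h3.congr (fun t => ?_)
    simp [Function.comp, neg_mul]
  have heoplim : Tendsto eop atTop (nhds 0) := by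
    have h4 : Tendsto (fun t => M * Real.exp (-ν * t) * en e0) atTop (nhds 0) := by
      simpa using (hexp0.const_mul M).mul_const (en e0)
    refine squeeze_zero_norm' ?_ h4
    filter_upwards [eventually_ge_atTop (0:ℝ)] with t ht
    exact le_trans (norm_le_en _) (hstab' t ht)
  have htend : Tendsto (fun t => ybar + eop t) atTop (nhds ybar) := by
    have h5 := tendsto_const_nhds (x := ybar) |>.add heoplim
    simpa using h5
  -- integrability bounds
  obtain ⟨cQ, hcQ0, hcQ⟩ := exists_mulVec_bound Q
  obtain ⟨cR, hcR0, hcR⟩ := exists_mulVec_bound R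
  obtain ⟨cG, hcG0, hcG⟩ := exists_mulVec_bound G
  have hEn0 : ∀ t, 0 ≤ en (eop t) := fun t => en_nonneg _
  have hint1 : IntegrableOn (fun t => Q.mulVec ((fun t => ybar + eop t) t - ybar)
      ⬝ᵥ ((fun t => ybar + eop t) t - ybar)
      + R.mulVec ((fun t => ubar - G.mulVec (eop t)) t - ubar)
      ⬝ᵥ ((fun t => ubar - G.mulVec (eop t)) t - ubar)) (Ici 0) := by
    have hfe : (fun t => Q.mulVec ((fun t => ybar + eop t) t - ybar)
        ⬝ᵥ ((fun t => ybar + eop t) t - ybar)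
        + R.mulVec ((fun t => ubar - G.mulVec (eop t)) t - ubar)
        ⬝ᵥ ((fun t => ubar - G.mulVec (eop t)) t - ubar))
        = fun t => Q.mulVec (eop t) ⬝ᵥ eop t
          + R.mulVec (G.mulVec (eop t)) ⬝ᵥ (G.mulVec (eop t)) := by
      funext t
      rw [show ybar + eop t - ybar = eop t from by abel,
        show ubar - G.mulVec (eop t) - ubar = -(G.mulVec (eop t)) from by abel]
      rw [Matrix.mulVec_neg, neg_dotProduct, dotProduct_neg, neg_neg]
    rw [hfe]
    refine Integrable.mono'
      (integrableOn_exp_decay ((cQ + cR * (cG * cG)) * ((M * en e0) * (M * en e0)))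
        (2 * ν) (by linarith)) ?_ ?_
    · have hcont : Continuous (fun t => Q.mulVec (eop t) ⬝ᵥ eop t
          + R.mulVec (G.mulVec (eop t)) ⬝ᵥ (G.mulVec (eop t))) := by
        rw [← continuousOn_univ]
        exact (continuousOn_dot (continuousOn_mulVec Q hceop.continuousOn)
          hceop.continuousOn).add
          (continuousOn_dot (continuousOn_mulVec R (continuousOn_mulVec G hceop.continuousOn))
            (continuousOn_mulVec G hceop.continuousOn))
      exact hcont.aestronglyMeasurable.restrict
    · filter_upwards [ae_restrict_mem measurableSet_Ici] with t ht
      have hb := hstab' t ht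
      have h1 : |Q.mulVec (eop t) ⬝ᵥ eop t| ≤ cQ * (en (eop t) * en (eop t)) := by
        calc |Q.mulVec (eop t) ⬝ᵥ eop t| ≤ en (Q.mulVec (eop t)) * en (eop t) := abs_dot_le _ _
        _ ≤ (cQ * en (eop t)) * en (eop t) := mul_le_mul_of_nonneg_right (hcQ _) (hEn0 t)
        _ = cQ * (en (eop t) * en (eop t)) := by ring
      have h2 : |R.mulVec (G.mulVec (eop t)) ⬝ᵥ (G.mulVec (eop t))|
          ≤ cR * (cG * cG) * (en (eop t) * en (eop t)) := by
        have ha := abs_dot_le (R.mulVec (G.mulVec (eop t))) (G.mulVec (eop t))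
        have hgb := hcG (eop t)
        have hR2 := hcR (G.mulVec (eop t))
        have hgn : 0 ≤ en (G.mulVec (eop t)) := en_nonneg _
        calc |R.mulVec (G.mulVec (eop t)) ⬝ᵥ (G.mulVec (eop t))|
            ≤ en (R.mulVec (G.mulVec (eop t))) * en (G.mulVec (eop t)) := ha
          _ ≤ (cR * en (G.mulVec (eop t))) * en (G.mulVec (eop t)) :=
              mul_le_mul_of_nonneg_right hR2 hgn
          _ = cR * (en (G.mulVec (eop t)) * en (G.mulVec (eop t))) := by ring
          _ ≤ cR * ((cG * en (eop t)) * (cG * en (eop t))) :=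
              mul_le_mul_of_nonneg_left (mul_self_le_mul_self hgn hgb) hcR0
          _ = cR * (cG * cG) * (en (eop t) * en (eop t)) := by ring
      have hsq : en (eop t) * en (eop t)
          ≤ (M * Real.exp (-ν*t) * en e0) * (M * Real.exp (-ν*t) * en e0) :=
        mul_self_le_mul_self (hEn0 t) hb
      have hexp2 : Real.exp (-ν*t) * Real.exp (-ν*t) = Real.exp (-(2*ν)*t) := by
        rw [← Real.exp_add]; congr 1; ring
      rw [Real.norm_eq_abs]
      have hcoef : 0 ≤ cQ + cR * (cG * cG) := by positivity
      have hstep : (cQ + cR * (cG * cG)) * (en (eop t) * en (eop t))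
          ≤ (cQ + cR * (cG * cG)) * ((M * Real.exp (-ν*t) * en e0)
            * (M * Real.exp (-ν*t) * en e0)) := mul_le_mul_of_nonneg_left hsq hcoef
      have hfin : (cQ + cR * (cG * cG)) * ((M * Real.exp (-ν*t) * en e0)
            * (M * Real.exp (-ν*t) * en e0))
          = (cQ + cR * (cG * cG)) * ((M * en e0) * (M * en e0)) * Real.exp (-(2*ν)*t) := by
        rw [show (M * Real.exp (-ν*t) * en e0) * (M * Real.exp (-ν*t) * en e0)
          = ((M * en e0) * (M * en e0)) * (Real.exp (-ν*t) * Real.exp (-ν*t)) from by ring,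
          hexp2]
        ring
      calc |Q.mulVec (eop t) ⬝ᵥ eop t + R.mulVec (G.mulVec (eop t)) ⬝ᵥ (G.mulVec (eop t))|
          ≤ |Q.mulVec (eop t) ⬝ᵥ eop t| + |R.mulVec (G.mulVec (eop t)) ⬝ᵥ (G.mulVec (eop t))| :=
            abs_add_le _ _
        _ ≤ cQ * (en (eop t) * en (eop t)) + cR * (cG * cG) * (en (eop t) * en (eop t)) :=
            add_le_add h1 h2
        _ = (cQ + cR * (cG * cG)) * (en (eop t) * en (eop t)) := by ring
        _ ≤ (cQ + cR * (cG * cG)) * ((M * Real.exp (-ν*t) * en e0)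
            * (M * Real.exp (-ν*t) * en e0)) := hstep
        _ = (cQ + cR * (cG * cG)) * ((M * en e0) * (M * en e0)) * Real.exp (-(2*ν)*t) := hfin
  have hint2 : IntegrableOn (fun t => Q.mulVec (ybar - yd)
      ⬝ᵥ ((fun t => ybar + eop t) t - ybar)
      + R.mulVec (ubar - ud) ⬝ᵥ ((fun t => ubar - G.mulVec (eop t)) t - ubar)) (Ici 0) := by
    have hfe : (fun t => Q.mulVec (ybar - yd) ⬝ᵥ ((fun t => ybar + eop t) t - ybar)
        + R.mulVec (ubar - ud) ⬝ᵥ ((fun t => ubar - G.mulVec (eop t)) t - ubar))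
        = fun t => Q.mulVec (ybar - yd) ⬝ᵥ eop t
          - R.mulVec (ubar - ud) ⬝ᵥ (G.mulVec (eop t)) := by
      funext t
      rw [show ybar + eop t - ybar = eop t from by abel,
        show ubar - G.mulVec (eop t) - ubar = -(G.mulVec (eop t)) from by abel,
        dotProduct_neg]
      ring
    rw [hfe]
    refine Integrable.mono'
      (integrableOn_exp_decay ((en (Q.mulVec (ybar - yd)) + en (R.mulVec (ubar - ud)) * cG)
        * (M * en e0)) ν hν) ?_ ?_
    · have hcont : Continuous (fun t => Q.mulVec (ybar - yd) ⬝ᵥ eop t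
          - R.mulVec (ubar - ud) ⬝ᵥ (G.mulVec (eop t))) := by
        rw [← continuousOn_univ]
        exact (continuousOn_dot continuousOn_const hceop.continuousOn).sub
          (continuousOn_dot continuousOn_const (continuousOn_mulVec G hceop.continuousOn))
      exact hcont.aestronglyMeasurable.restrict
    · filter_upwards [ae_restrict_mem measurableSet_Ici] with t ht
      have hb := hstab' t ht
      have h1 : |Q.mulVec (ybar - yd) ⬝ᵥ eop t| ≤ en (Q.mulVec (ybar - yd)) * en (eop t) :=
        abs_dot_le _ _
      have h2 : |R.mulVec (ubar - ud) ⬝ᵥ (G.mulVec (eop t))|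
          ≤ en (R.mulVec (ubar - ud)) * (cG * en (eop t)) := by
        have ha := abs_dot_le (R.mulVec (ubar - ud)) (G.mulVec (eop t))
        have hgb := hcG (eop t)
        nlinarith [en_nonneg (R.mulVec (ubar - ud)), en_nonneg (G.mulVec (eop t))]
      rw [Real.norm_eq_abs]
      have hcoef : 0 ≤ en (Q.mulVec (ybar - yd)) + en (R.mulVec (ubar - ud)) * cG := by
        have hh1 := en_nonneg (Q.mulVec (ybar - yd))
        have hh2 := en_nonneg (R.mulVec (ubar - ud))
        positivity
      have hstep : (en (Q.mulVec (ybar - yd)) + en (R.mulVec (ubar - ud)) * cG) * en (eop t)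
          ≤ (en (Q.mulVec (ybar - yd)) + en (R.mulVec (ubar - ud)) * cG)
            * (M * Real.exp (-ν*t) * en e0) := mul_le_mul_of_nonneg_left hb hcoef
      have habs : |Q.mulVec (ybar - yd) ⬝ᵥ eop t - R.mulVec (ubar - ud) ⬝ᵥ (G.mulVec (eop t))|
          ≤ |Q.mulVec (ybar - yd) ⬝ᵥ eop t| + |R.mulVec (ubar - ud) ⬝ᵥ (G.mulVec (eop t))| := by
        rw [sub_eq_add_neg]
        refine (abs_add_le _ _).trans ?_
        rw [abs_neg]
      calc |Q.mulVec (ybar - yd) ⬝ᵥ eop t - R.mulVec (ubar - ud) ⬝ᵥ (G.mulVec (eop t))|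
          ≤ |Q.mulVec (ybar - yd) ⬝ᵥ eop t| + |R.mulVec (ubar - ud) ⬝ᵥ (G.mulVec (eop t))| := habs
        _ ≤ en (Q.mulVec (ybar - yd)) * en (eop t)
            + en (R.mulVec (ubar - ud)) * (cG * en (eop t)) := add_le_add h1 h2
        _ = (en (Q.mulVec (ybar - yd)) + en (R.mulVec (ubar - ud)) * cG) * en (eop t) := by ring
        _ ≤ (en (Q.mulVec (ybar - yd)) + en (R.mulVec (ubar - ud)) * cG)
            * (M * Real.exp (-ν*t) * en e0) := hstep
        _ = (en (Q.mulVec (ybar - yd)) + en (R.mulVec (ubar - ud)) * cG)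
            * (M * en e0) * Real.exp (-ν*t) := by ring
  -- the optimal pair is admissible and attains the value
  have hfbk : ∀ t : ℝ, (fun t => ubar - G.mulVec (eop t)) t
      = ubar - G.mulVec ((fun t => ybar + eop t) t - ybar) := by
    intro t
    simp only
    rw [show ybar + eop t - ybar = eop t from by abel]
  have hgval := (main (fun t => ybar + eop t) (fun t => ubar - G.mulVec (eop t))
    hyder hucont htend hint1 hint2).2 hfbk
  have hWval : W (y₀ - ybar) = ε * ((1 / 2) * (S.mulVec (y₀ - ybar) ⬝ᵥ (y₀ - ybar))
      - lambdabar ⬝ᵥ (y₀ - ybar)) := by rw [hWdef]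
  have he00 : (fun t => ybar + eop t) 0 - ybar = y₀ - ybar := by
    simp only [heop0]
    rw [he0]
    abel
  have hmem : ε * ((1 / 2) * (S.mulVec (y₀ - ybar) ⬝ᵥ (y₀ - ybar))
      - lambdabar ⬝ᵥ (y₀ - ybar)) ∈ {c : ℝ | ∃ y : ℝ → Fin n → ℝ, ∃ u : ℝ → Fin m → ℝ,
        (∀ t ∈ Set.Ici (0 : ℝ),
          HasDerivWithinAt y (d (y t) (u t)) (Set.Ici 0) t) ∧
        ContinuousOn u (Set.Ici 0) ∧
        y 0 = y₀ ∧
        Filter.Tendsto y Filter.atTop (nhds ybar) ∧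
        IntegrableOn (fun t => Q.mulVec (y t - ybar) ⬝ᵥ (y t - ybar)
          + R.mulVec (u t - ubar) ⬝ᵥ (u t - ubar)) (Set.Ici 0) ∧
        IntegrableOn (fun t => Q.mulVec (ybar - yd) ⬝ᵥ (y t - ybar)
          + R.mulVec (ubar - ud) ⬝ᵥ (u t - ubar)) (Set.Ici 0) ∧
        c = (1 / 2) * ∫ t in Set.Ioi (0 : ℝ),
          (Q.mulVec (y t - yd) ⬝ᵥ (y t - yd) + R.mulVec (u t - ud) ⬝ᵥ (u t - ud)
            - Q.mulVec (ybar - yd) ⬝ᵥ (ybar - yd) - R.mulVec (ubar - ud) ⬝ᵥ (ubar - ud))} := by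
    refine ⟨fun t => ybar + eop t, fun t => ubar - G.mulVec (eop t),
      fun t ht => ?_, hucont, hy0', htend, hint1, hint2, ?_⟩
    · rw [hd]
      exact hyder t ht
    · rw [hgval, he00, ← hWval]
      ring
  have hlb : ∀ c ∈ {c : ℝ | ∃ y : ℝ → Fin n → ℝ, ∃ u : ℝ → Fin m → ℝ,
        (∀ t ∈ Set.Ici (0 : ℝ),
          HasDerivWithinAt y (d (y t) (u t)) (Set.Ici 0) t) ∧
        ContinuousOn u (Set.Ici 0) ∧
        y 0 = y₀ ∧
        Filter.Tendsto y Filter.atTop (nhds ybar) ∧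
        IntegrableOn (fun t => Q.mulVec (y t - ybar) ⬝ᵥ (y t - ybar)
          + R.mulVec (u t - ubar) ⬝ᵥ (u t - ubar)) (Set.Ici 0) ∧
        IntegrableOn (fun t => Q.mulVec (ybar - yd) ⬝ᵥ (y t - ybar)
          + R.mulVec (ubar - ud) ⬝ᵥ (u t - ubar)) (Set.Ici 0) ∧
        c = (1 / 2) * ∫ t in Set.Ioi (0 : ℝ),
          (Q.mulVec (y t - yd) ⬝ᵥ (y t - yd) + R.mulVec (u t - ud) ⬝ᵥ (u t - ud)
            - Q.mulVec (ybar - yd) ⬝ᵥ (ybar - yd) - R.mulVec (ubar - ud) ⬝ᵥ (ubar - ud))},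
      ε * ((1 / 2) * (S.mulVec (y₀ - ybar) ⬝ᵥ (y₀ - ybar))
        - lambdabar ⬝ᵥ (y₀ - ybar)) ≤ c := by
    rintro c ⟨y, u, hy, hu, h0, hl, hi1, hi2, hc⟩
    simp only [hd] at hy
    have h := (main y u hy hu hl hi1 hi2).1
    rw [h0] at h
    rw [hc]
    linarith [h, hWval]
  exact le_antisymm
    (csInf_le ⟨_, fun c hc => hlb c hc⟩ hmem)
    (le_csInf ⟨_, hmem⟩ hlb)


end VfVb

end


theorem Vf_Vb_identification
    (n m : ℕ) (hn : 1 ≤ n) (hm : 1 ≤ m)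
    (A : Matrix (Fin n) (Fin n) ℝ) (B : Matrix (Fin n) (Fin m) ℝ)
    (Q : Matrix (Fin n) (Fin n) ℝ) (hQ : Q.PosDef)
    (R : Matrix (Fin m) (Fin m) ℝ) (hR : R.PosDef)
    (yd : Fin n → ℝ) (ud : Fin m → ℝ)
    (ybar : Fin n → ℝ) (ubar : Fin m → ℝ) (lambdabar : Fin n → ℝ)
    (hfeas : A.mulVec ybar + B.mulVec ubar = 0)
    (hKKT1 : Q.mulVec (ybar - yd) = Aᵀ.mulVec lambdabar)
    (hKKT2 : R.mulVec (ubar - ud) = Bᵀ.mulVec lambdabar)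
    (P : Matrix (Fin n) (Fin n) ℝ) (hP : P.PosDef)
    (hAREP : Aᵀ * P + P * A - P * B * R⁻¹ * Bᵀ * P = -Q)
    (N : Matrix (Fin n) (Fin n) ℝ) (hN : (-N).PosDef) (hNsymm : Nᵀ = N)
    (hAREN : Aᵀ * N + N * A - N * B * R⁻¹ * Bᵀ * N = -Q)
    (M ν : ℝ) (hM : 1 ≤ M) (hν : 0 < ν)
    (hstabP : ∀ t : ℝ, 0 ≤ t → ∀ x : Fin n → ℝ,
      Real.sqrt ((NormedSpace.exp (t • (A - B * R⁻¹ * Bᵀ * P))).mulVec x ⬝ᵥ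
          (NormedSpace.exp (t • (A - B * R⁻¹ * Bᵀ * P))).mulVec x)
        ≤ M * Real.exp (-ν * t) * Real.sqrt (x ⬝ᵥ x))
    (hstabN : ∀ t : ℝ, 0 ≤ t → ∀ x : Fin n → ℝ,
      Real.sqrt ((NormedSpace.exp ((-t) • (A - B * R⁻¹ * Bᵀ * N))).mulVec x ⬝ᵥ
          (NormedSpace.exp ((-t) • (A - B * R⁻¹ * Bᵀ * N))).mulVec x)
        ≤ M * Real.exp (-ν * t) * Real.sqrt (x ⬝ᵥ x)) :
    (∀ y₀ : Fin n → ℝ,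
      sInf {c : ℝ | ∃ y : ℝ → Fin n → ℝ, ∃ u : ℝ → Fin m → ℝ,
        (∀ t ∈ Set.Ici (0 : ℝ),
          HasDerivWithinAt y (A.mulVec (y t) + B.mulVec (u t)) (Set.Ici 0) t) ∧
        ContinuousOn u (Set.Ici 0) ∧
        y 0 = y₀ ∧
        Filter.Tendsto y Filter.atTop (nhds ybar) ∧
        IntegrableOn (fun t => Q.mulVec (y t - ybar) ⬝ᵥ (y t - ybar)
          + R.mulVec (u t - ubar) ⬝ᵥ (u t - ubar)) (Set.Ici 0) ∧
        IntegrableOn (fun t => Q.mulVec (ybar - yd) ⬝ᵥ (y t - ybar)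
          + R.mulVec (ubar - ud) ⬝ᵥ (u t - ubar)) (Set.Ici 0) ∧
        c = (1 / 2) * ∫ t in Set.Ioi (0 : ℝ),
          (Q.mulVec (y t - yd) ⬝ᵥ (y t - yd) + R.mulVec (u t - ud) ⬝ᵥ (u t - ud)
            - Q.mulVec (ybar - yd) ⬝ᵥ (ybar - yd) - R.mulVec (ubar - ud) ⬝ᵥ (ubar - ud))}
      = (1 / 2) * (P.mulVec (y₀ - ybar) ⬝ᵥ (y₀ - ybar)) - lambdabar ⬝ᵥ (y₀ - ybar))
    ∧
    (∀ y₁ : Fin n → ℝ,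
      sInf {c : ℝ | ∃ y : ℝ → Fin n → ℝ, ∃ u : ℝ → Fin m → ℝ,
        (∀ t ∈ Set.Ici (0 : ℝ),
          HasDerivWithinAt y (-(A.mulVec (y t)) - B.mulVec (u t)) (Set.Ici 0) t) ∧
        ContinuousOn u (Set.Ici 0) ∧
        y 0 = y₁ ∧
        Filter.Tendsto y Filter.atTop (nhds ybar) ∧
        IntegrableOn (fun t => Q.mulVec (y t - ybar) ⬝ᵥ (y t - ybar)
          + R.mulVec (u t - ubar) ⬝ᵥ (u t - ubar)) (Set.Ici 0) ∧
        IntegrableOn (fun t => Q.mulVec (ybar - yd) ⬝ᵥ (y t - ybar)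
          + R.mulVec (ubar - ud) ⬝ᵥ (u t - ubar)) (Set.Ici 0) ∧
        c = (1 / 2) * ∫ t in Set.Ioi (0 : ℝ),
          (Q.mulVec (y t - yd) ⬝ᵥ (y t - yd) + R.mulVec (u t - ud) ⬝ᵥ (u t - ud)
            - Q.mulVec (ybar - yd) ⬝ᵥ (ybar - yd) - R.mulVec (ubar - ud) ⬝ᵥ (ubar - ud))}
      = -(1 / 2) * (N.mulVec (y₁ - ybar) ⬝ᵥ (y₁ - ybar)) + lambdabar ⬝ᵥ (y₁ - ybar)) := by
  constructor
  · intro y₀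
    have h := VfVb.master n m A B Q hQ R hR yd ud ybar ubar lambdabar hfeas hKKT1 hKKT2
      1 (Or.inl rfl) P (VfVb.posdef_symm hP) hAREP M ν hν
      (by
        intro t ht x
        have h1 := hstabP t ht x
        rw [one_mul]
        exact h1)
      (fun v w => A.mulVec v + B.mulVec w)
      (by intro v w; rw [one_smul])
      y₀
    rw [one_mul] at h
    exact h
  · intro y₁
    have h := VfVb.master n m A B Q hQ R hR yd ud ybar ubar lambdabar hfeas hKKT1 hKKT2
      (-1) (Or.inr rfl) N hNsymm hAREN M ν hν
      (by
        intro t ht x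
        have h1 := hstabN t ht x
        rw [neg_one_mul]
        exact h1)
      (fun v w => -(A.mulVec v) - B.mulVec w)
      (by intro v w; rw [neg_smul, one_smul]; abel)
      y₁
    rw [h]
    ring
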